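/- Let c_1, c_2 ∈ ℂ with (c_1, c_2) ≠ (0,0) and let t ∈ ℝ with sin t ≠ 0. Then exp(−it(σ_x⊗I_2)) (c_1|01⟩ + c_2|10⟩) does not lie in the subspace span_ℂ{|01⟩, |10⟩} of ℂ⁴. (Explicitly, exp(−it(σ_x⊗I_2))(c_1|01⟩ + c_2|10⟩) = c_1 cos t |01⟩ − i c_1 sin t |11⟩ + c_2 cos t |10⟩ − i c_2 sin t |00⟩.) -/

import Mathlib

open Matrix NormedSpace
open scoped Kronecker

noncomputable section

def σx : Matrix (Fin 2) (Fin 2) ℂ := !![0, 1; 1, 0]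

def ket0 : Fin 2 → ℂ := ![1, 0]
def ket1 : Fin 2 → ℂ := ![0, 1]

def ket00 : Fin 2 × Fin 2 → ℂ := fun p => ket0 p.1 * ket0 p.2
def ket01 : Fin 2 × Fin 2 → ℂ := fun p => ket0 p.1 * ket1 p.2
def ket10 : Fin 2 × Fin 2 → ℂ := fun p => ket1 p.1 * ket0 p.2
def ket11 : Fin 2 × Fin 2 → ℂ := fun p => ket1 p.1 * ket1 p.2

/-- The Hadamard-like matrix (unnormalized) diagonalizing `σx`. -/
def Hm : Matrix (Fin 2) (Fin 2) ℂ := !![1, 1; 1, -1]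

def P : Matrix (Fin 2 × Fin 2) (Fin 2 × Fin 2) ℂ := Hm ⊗ₖ 1

lemma PP : P * ((2⁻¹ : ℂ) • P) = 1 := by
  ext ⟨i,j⟩ ⟨k,l⟩
  fin_cases i <;> fin_cases j <;> fin_cases k <;> fin_cases l <;>
    simp [P, Hm, Matrix.mul_apply, Fintype.sum_prod_type, Fin.sum_univ_two,
      Matrix.one_apply, Prod.mk.injEq, Prod.ext_iff] <;> norm_num

lemma PP' : ((2⁻¹ : ℂ) • P) * P = 1 := by
  ext ⟨i,j⟩ ⟨k,l⟩
  fin_cases i <;> fin_cases j <;> fin_cases k <;> fin_cases l <;>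
    simp [P, Hm, Matrix.mul_apply, Fintype.sum_prod_type, Fin.sum_univ_two,
      Matrix.one_apply, Prod.mk.injEq, Prod.ext_iff] <;> norm_num

def U : (Matrix (Fin 2 × Fin 2) (Fin 2 × Fin 2) ℂ)ˣ := ⟨P, (2⁻¹ : ℂ) • P, PP, PP'⟩

def dv (t : ℝ) : Fin 2 × Fin 2 → ℂ := fun p => -Complex.I * t * (if p.1 = 0 then 1 else -1)

lemma conj_eq (t : ℝ) :
    (-Complex.I * (t : ℂ)) • (σx ⊗ₖ (1 : Matrix (Fin 2) (Fin 2) ℂ)) =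
      (U : Matrix (Fin 2 × Fin 2) (Fin 2 × Fin 2) ℂ) * diagonal (dv t) *
        ((U⁻¹ : (Matrix (Fin 2 × Fin 2) (Fin 2 × Fin 2) ℂ)ˣ) :
          Matrix (Fin 2 × Fin 2) (Fin 2 × Fin 2) ℂ) := by
  ext ⟨i,j⟩ ⟨k,l⟩
  fin_cases i <;> fin_cases j <;> fin_cases k <;> fin_cases l <;>
    simp [U, P, Hm, σx, dv, Matrix.mul_apply, Fintype.sum_prod_type, Fin.sum_univ_two,
      Matrix.diagonal, Matrix.one_apply, Prod.mk.injEq, Prod.ext_iff] <;> ring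

lemma expkey (t : ℝ) :
    exp ((-Complex.I * (t : ℂ)) • (σx ⊗ₖ (1 : Matrix (Fin 2) (Fin 2) ℂ))) =
      (Complex.cos t) • (1 : Matrix (Fin 2 × Fin 2) (Fin 2 × Fin 2) ℂ)
        - (Complex.I * Complex.sin t) • (σx ⊗ₖ (1 : Matrix (Fin 2) (Fin 2) ℂ)) := by
  rw [conj_eq, Matrix.exp_units_conj, Matrix.exp_diagonal]
  ext ⟨i,j⟩ ⟨k,l⟩
  fin_cases i <;> fin_cases j <;> fin_cases k <;> fin_cases l <;>
    simp [U, P, Hm, σx, dv, Matrix.mul_apply, Fintype.sum_prod_type, Fin.sum_univ_two,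
      Matrix.diagonal, Matrix.one_apply, Prod.mk.injEq, Prod.ext_iff,
      ← Complex.exp_eq_exp_ℂ, Complex.cos, Complex.sin]
  all_goals ring_nf
  all_goals simp [Complex.I_sq]
  all_goals ring_nf

/-- A control Hamiltonian `σ_x` on the first qubit drives any nonzero state of the
decoherence-free subspace `span{|01⟩,|10⟩}` out of that subspace whenever `sin t ≠ 0`. -/
theorem control_drives_state_out_of_dfs
    (c₁ c₂ : ℂ) (hc : ¬(c₁ = 0 ∧ c₂ = 0)) (t : ℝ) (ht : Real.sin t ≠ 0) :
    (exp ((-Complex.I * (t : ℂ)) •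
          (σx ⊗ₖ (1 : Matrix (Fin 2) (Fin 2) ℂ)))).mulVec (c₁ • ket01 + c₂ • ket10) =
        (c₁ * Real.cos t) • ket01 - (Complex.I * c₁ * Real.sin t) • ket11
          + (c₂ * Real.cos t) • ket10 - (Complex.I * c₂ * Real.sin t) • ket00 ∧
      (exp ((-Complex.I * (t : ℂ)) •
          (σx ⊗ₖ (1 : Matrix (Fin 2) (Fin 2) ℂ)))).mulVec (c₁ • ket01 + c₂ • ket10) ∉
        Submodule.span ℂ ({ket01, ket10} : Set (Fin 2 × Fin 2 → ℂ)) := by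
  have heq : (exp ((-Complex.I * (t : ℂ)) •
          (σx ⊗ₖ (1 : Matrix (Fin 2) (Fin 2) ℂ)))).mulVec (c₁ • ket01 + c₂ • ket10) =
        (c₁ * Real.cos t) • ket01 - (Complex.I * c₁ * Real.sin t) • ket11
          + (c₂ * Real.cos t) • ket10 - (Complex.I * c₂ * Real.sin t) • ket00 := by
    rw [expkey t]
    funext p
    obtain ⟨i, j⟩ := p
    fin_cases i <;> fin_cases j <;>
      simp [Matrix.mulVec, dotProduct, Fintype.sum_prod_type, Fin.sum_univ_two,
        σx, ket00, ket01, ket10, ket11, ket0, ket1, Matrix.one_apply, Prod.mk.injEq,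
        Prod.ext_iff, Complex.cos_ofReal_re, Complex.sin_ofReal_re] <;> ring
  refine ⟨heq, ?_⟩
  rw [heq]
  intro h
  obtain ⟨a, b, hab⟩ := Submodule.mem_span_pair.mp h
  have h00 := congrFun hab ((0 : Fin 2), (0 : Fin 2))
  have h11 := congrFun hab ((1 : Fin 2), (1 : Fin 2))
  simp only [ket00, ket01, ket10, ket11, ket0, ket1, Pi.add_apply, Pi.sub_apply,
    Pi.smul_apply, smul_eq_mul, Matrix.cons_val_zero, Matrix.cons_val_one, Matrix.head_cons,
    mul_one, mul_zero, zero_mul, one_mul, add_zero, zero_add, zero_sub, sub_zero] at h00 h11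
  have hs : (Real.sin t : ℂ) ≠ 0 := Complex.ofReal_ne_zero.mpr ht
  have hc₂ : c₂ = 0 := by
    have : Complex.I * c₂ * Real.sin t = 0 := by linear_combination h00
    rcases mul_eq_zero.mp this with h | h
    · rcases mul_eq_zero.mp h with h' | h'
      · exact absurd h' Complex.I_ne_zero
      · exact h'
    · exact absurd h hs
  have hc₁ : c₁ = 0 := by
    have : Complex.I * c₁ * Real.sin t = 0 := by linear_combination h11
    rcases mul_eq_zero.mp this with h | h
    · rcases mul_eq_zero.mp h with h' | h'
      · exact absurd h' Complex.I_ne_zero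
      · exact h'
    · exact absurd h hs
  exact hc ⟨hc₁, hc₂⟩

end
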